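/- Let R be a ring with invariant basis number. For every automorphism φ of the category S_R there exists a ring automorphism σ of R such that φ is naturally isomorphic (as a functor S_R → S_R) to the skew-inner automorphism φ^σ. -/

import Mathlib

open CategoryTheory

/-- The category `S_R`: objects are the natural numbers, the object `n` standing for the
free left `R`-module `R^n = (Fin n → R)`; morphisms `n ⟶ m` are the `R`-linear maps
`R^n → R^m`.  This is (a presentation of) the full subcategory of left `R`-modules with
objects exactly the modules `R^n`, `n ∈ ℕ`. -/
def SR (R : Type) [Ring R] : Type := ℕ

instance (R : Type) [Ring R] : Category (SR R) where
  Hom n m := (Fin n → R) →ₗ[R] (Fin m → R)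
  id _ := LinearMap.id
  comp f g := g.comp f
  id_comp f := LinearMap.comp_id f
  comp_id f := LinearMap.id_comp f
  assoc f g h := (LinearMap.comp_assoc f g h).symm

variable {R : Type} [Ring R]

/-- The object of `S_R` corresponding to `n ∈ ℕ`, i.e. the module `R^n`. -/
def ob (R : Type) [Ring R] (n : ℕ) : SR R := n

/-- A morphism of `S_R` is just an `R`-linear map. -/
def ofLin {n m : ℕ} (f : (Fin n → R) →ₗ[R] (Fin m → R)) : ob R n ⟶ ob R m := f

/-- The underlying `R`-linear map of a morphism of `S_R`. -/
def toLin {n m : SR R} (f : n ⟶ m) : (Fin n → R) →ₗ[R] (Fin m → R) := f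

/-- The canonical injection `μ_i : R = R^1 → R^n` into the `i`-th coordinate,
as a morphism of `S_R`. -/
def mu (R : Type) [Ring R] (n : ℕ) (i : Fin n) : ob R 1 ⟶ ob R n :=
  ofLin ((LinearMap.single R (fun _ : Fin n => R) i).comp (LinearMap.proj 0))

/-- The skew of an `R`-linear map `f : R^n → R^m` by a ring automorphism `σ` of `R`:
the map `σ_m ∘ f ∘ σ_n⁻¹`, where `σ_k : R^k → R^k` is the coordinatewise application
of `σ`.  It is again `R`-linear. -/
def skewMap (σ : R ≃+* R) {n m : ℕ} (f : (Fin n → R) →ₗ[R] (Fin m → R)) :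
    (Fin n → R) →ₗ[R] (Fin m → R) where
  toFun x := fun j => σ (f (fun i => σ.symm (x i)) j)
  map_add' x y := by
    funext j
    have h : (fun i => σ.symm ((x + y) i)) =
        (fun i => σ.symm (x i)) + (fun i => σ.symm (y i)) := by
      funext i; simp
    show σ (f (fun i => σ.symm ((x + y) i)) j) =
      σ (f (fun i => σ.symm (x i)) j) + σ (f (fun i => σ.symm (y i)) j)
    rw [h, map_add]
    simp
  map_smul' r x := by
    funext j
    have h : (fun i => σ.symm ((r • x) i)) =
        σ.symm r • (fun i => σ.symm (x i)) := by
      funext i; simp [Pi.smul_apply, map_mul]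
    show σ (f (fun i => σ.symm ((r • x) i)) j) = ((RingHom.id R) r • fun j' => σ (f (fun i => σ.symm (x i)) j')) j
    rw [h, map_smul]
    simp [Pi.smul_apply, map_mul]

/-- The skew-inner automorphism `φ^σ` of the category `S_R` determined by a ring
automorphism `σ` of `R`: it fixes all objects and sends `f : R^n → R^m` to
`σ_m ∘ f ∘ σ_n⁻¹`. -/
def skewFunctor (σ : R ≃+* R) : SR R ⥤ SR R where
  obj n := n
  map {n m} f := ofLin (skewMap σ (toLin f))
  map_id n := by
    show ofLin (skewMap σ LinearMap.id) = LinearMap.id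
    apply LinearMap.ext
    intro x
    show (fun j => σ (σ.symm (x j))) = x
    funext j; simp
  map_comp {n m k} f g := by
    show ofLin (skewMap σ ((toLin g).comp (toLin f))) =
      (skewMap σ (toLin g)).comp (skewMap σ (toLin f))
    apply LinearMap.ext
    intro x
    show (fun j => σ ((toLin g) ((toLin f) (fun i => σ.symm (x i))) j)) =
      (fun j => σ ((toLin g) (fun i => σ.symm (σ ((toLin f) (fun i' => σ.symm (x i')) i))) j))
    simp

section Base

variable {R : Type} [Ring R]

instance homAdd (n m : SR R) : AddCommGroup (n ⟶ m) :=
  inferInstanceAs (AddCommGroup ((Fin n → R) →ₗ[R] (Fin m → R)))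

/-- The underlying natural number of an object of `S_R`. -/
abbrev natOf {R : Type} [Ring R] (n : SR R) : ℕ := n

lemma hom_ext {n m : SR R} {f g : n ⟶ m} (h : ∀ x, toLin f x = toLin g x) : f = g :=
  LinearMap.ext h

@[simp] lemma toLin_comp {n m k : SR R} (f : n ⟶ m) (g : m ⟶ k) (x : Fin n → R) :
    toLin (f ≫ g) x = toLin g (toLin f x) := rfl

@[simp] lemma toLin_id {n : SR R} (x : Fin n → R) : toLin (𝟙 n) x = x := rfl

@[simp] lemma toLin_add {n m : SR R} (f g : n ⟶ m) (x : Fin n → R) :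
    toLin (f + g) x = toLin f x + toLin g x := rfl

@[simp] lemma toLin_zero {n m : SR R} (x : Fin n → R) : toLin (0 : n ⟶ m) x = 0 := rfl

lemma toLin_sum {n m : SR R} {ι : Type} (s : Finset ι) (f : ι → (n ⟶ m)) (x : Fin n → R) :
    toLin (∑ i ∈ s, f i) x = ∑ i ∈ s, toLin (f i) x :=
  LinearMap.sum_apply _ _ _

lemma comp_add' {n m k : SR R} (f : n ⟶ m) (g h : m ⟶ k) :
    f ≫ (g + h) = f ≫ g + f ≫ h := hom_ext fun x => by simp

lemma add_comp' {n m k : SR R} (f g : n ⟶ m) (h : m ⟶ k) :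
    (f + g) ≫ h = f ≫ h + g ≫ h := hom_ext fun x => by simp [map_add]

lemma comp_zero' {n m k : SR R} (f : n ⟶ m) : f ≫ (0 : m ⟶ k) = 0 := hom_ext fun x => rfl

lemma zero_comp' {n m k : SR R} (h : m ⟶ k) : (0 : n ⟶ m) ≫ h = 0 :=
  hom_ext fun x => map_zero (toLin h)

lemma sum_comp' {n m k : SR R} {ι : Type} (s : Finset ι) (f : ι → (n ⟶ m)) (h : m ⟶ k) :
    (∑ i ∈ s, f i) ≫ h = ∑ i ∈ s, f i ≫ h :=
  hom_ext fun x => by simp [toLin_sum, map_sum]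

lemma comp_sum' {n m k : SR R} {ι : Type} (s : Finset ι) (f : n ⟶ m) (h : ι → (m ⟶ k)) :
    f ≫ (∑ i ∈ s, h i) = ∑ i ∈ s, f ≫ h i :=
  hom_ext fun x => by simp [toLin_sum]

end Base
section Bic
attribute [reducible] ob

variable {R : Type} [Ring R]

/-- inclusion `R^n → R^{n+m}` -/
def binl (R : Type) [Ring R] (n m : ℕ) : ob R n ⟶ ob R (n + m) :=
  ofLin
  { toFun := fun x => Fin.append x 0
    map_add' := fun x y => by
      funext j
      refine Fin.addCases (fun i => ?_) (fun i => ?_) j <;>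
        simp [Fin.append_left, Fin.append_right]
    map_smul' := fun r x => by
      funext j
      refine Fin.addCases (fun i => ?_) (fun i => ?_) j <;>
        simp [Fin.append_left, Fin.append_right] }

def binr (R : Type) [Ring R] (n m : ℕ) : ob R m ⟶ ob R (n + m) :=
  ofLin
  { toFun := fun x => Fin.append 0 x
    map_add' := fun x y => by
      funext j
      refine Fin.addCases (fun i => ?_) (fun i => ?_) j <;>
        simp [Fin.append_left, Fin.append_right]
    map_smul' := fun r x => by
      funext j
      refine Fin.addCases (fun i => ?_) (fun i => ?_) j <;>
        simp [Fin.append_left, Fin.append_right] }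

def bfst (R : Type) [Ring R] (n m : ℕ) : ob R (n + m) ⟶ ob R n :=
  ofLin (LinearMap.funLeft R R (Fin.castAdd m))

def bsnd (R : Type) [Ring R] (n m : ℕ) : ob R (n + m) ⟶ ob R m :=
  ofLin (LinearMap.funLeft R R (Fin.natAdd n))

@[simp] lemma binl_fst (n m : ℕ) : binl R n m ≫ bfst R n m = 𝟙 (ob R n) :=
  hom_ext fun x => by
    funext i
    show Fin.append x 0 (Fin.castAdd m i) = x i
    simp [Fin.append_left]

@[simp] lemma binl_snd (n m : ℕ) : binl R n m ≫ bsnd R n m = 0 :=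
  hom_ext fun x => by
    funext i
    show Fin.append x (0 : Fin m → R) (Fin.natAdd n i) = 0
    simp [Fin.append_right]

@[simp] lemma binr_fst (n m : ℕ) : binr R n m ≫ bfst R n m = 0 :=
  hom_ext fun x => by
    funext i
    show Fin.append (0 : Fin n → R) x (Fin.castAdd m i) = 0
    simp [Fin.append_left]

@[simp] lemma binr_snd (n m : ℕ) : binr R n m ≫ bsnd R n m = 𝟙 (ob R m) :=
  hom_ext fun x => by
    funext i
    show Fin.append (0 : Fin n → R) x (Fin.natAdd n i) = x i
    simp [Fin.append_right]

lemma btotal (n m : ℕ) :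
    bfst R n m ≫ binl R n m + bsnd R n m ≫ binr R n m = 𝟙 (ob R (n + m)) :=
  hom_ext fun x => by
    funext j
    show Fin.append (fun i => x (Fin.castAdd m i)) (0 : Fin m → R) j
        + Fin.append (0 : Fin n → R) (fun i => x (Fin.natAdd n i)) j = x j
    refine Fin.addCases (fun i => ?_) (fun i => ?_) j <;>
      simp [Fin.append_left, Fin.append_right]

end Bic
section MuPr

variable {R : Type} [Ring R]

/-- projection `R^n → R^1` -/
def pr (R : Type) [Ring R] (n : ℕ) (i : Fin n) : ob R n ⟶ ob R 1 :=
  ofLin (LinearMap.pi fun _ : Fin 1 => LinearMap.proj i)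

@[simp] lemma toLin_pr (n : ℕ) (i : Fin n) (x : Fin n → R) (j : Fin 1) :
    toLin (pr R n i) x j = x i := rfl

@[simp] lemma toLin_mu (n : ℕ) (i : Fin n) (x : Fin 1 → R) :
    toLin (mu R n i) x = Pi.single i (x 0) := rfl

lemma mu_pr (n : ℕ) (i j : Fin n) :
    mu R n j ≫ pr R n i = if i = j then 𝟙 (ob R 1) else 0 :=
  hom_ext fun x => by
    funext k
    simp only [toLin_comp, toLin_mu, toLin_pr]
    rcases eq_or_ne i j with h | h
    · subst h
      have hk : k = 0 := Subsingleton.elim _ _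
      simp [hk]
    · simp [h, Pi.single_eq_of_ne h]

lemma pr_mu_total (n : ℕ) :
    (∑ i : Fin n, pr R n i ≫ mu R n i) = 𝟙 (ob R n) :=
  hom_ext fun x => by
    rw [toLin_sum]
    funext j
    rw [Finset.sum_apply]
    simp [Pi.single_apply, Finset.sum_ite_eq]

/-- right multiplication `R^1 → R^1` -/
def rmul (r : R) : ob R 1 ⟶ ob R 1 :=
  ofLin
  { toFun := fun x _ => x 0 * r
    map_add' := fun x y => by funext j; simp [add_mul]
    map_smul' := fun s x => by funext j; simp [mul_assoc] }

@[simp] lemma toLin_rmul (r : R) (x : Fin 1 → R) (j : Fin 1) :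
    toLin (rmul r) x j = x 0 * r := rfl

def ve (R : Type) [Ring R] : Fin 1 → R := fun _ => 1

@[simp] lemma ve_apply (j : Fin 1) : ve R j = 1 := rfl

lemma rmul_comp (a b : R) : rmul a ≫ rmul b = rmul (a * b) :=
  hom_ext fun x => by funext j; simp [mul_assoc]

lemma rmul_add (a b : R) : rmul (a + b) = rmul a + rmul b :=
  hom_ext fun x => by funext j; simp [mul_add]

lemma rmul_one : rmul (1 : R) = 𝟙 (ob R 1) :=
  hom_ext fun x => by
    funext j
    have : j = 0 := Subsingleton.elim _ _
    simp [this]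

lemma rmul_inj {a b : R} (h : rmul a = rmul b) : a = b := by
  have := congrFun (congrArg (fun f => toLin f (ve R)) h) 0
  simpa using this

lemma eq_smul_ve (x : Fin 1 → R) : x = x 0 • ve R := by
  funext i
  have : i = 0 := Subsingleton.elim _ _
  simp [this, ve]

lemma endo_eq_rmul (h : ob R 1 ⟶ ob R 1) : h = rmul (toLin h (ve R) 0) :=
  hom_ext fun x => by
    funext j
    have hj : j = 0 := Subsingleton.elim _ _
    rw [eq_smul_ve x, map_smul]
    simp [hj]

/-- decomposition of a morphism out of `R^1` -/
lemma hom_one_decomp {m : ℕ} (g : ob R 1 ⟶ ob R m) :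
    g = ∑ j : Fin m, rmul (toLin g (ve R) j) ≫ mu R m j :=
  hom_ext fun x => by
    rw [toLin_sum]
    funext k
    rw [Finset.sum_apply]
    have : toLin g x k = x 0 * toLin g (ve R) k := by
      rw [eq_smul_ve x, map_smul]; simp
    simp [this, Pi.single_apply, Finset.sum_ite_eq]

lemma skew_decomp (σ : R ≃+* R) {m : ℕ} (g : ob R 1 ⟶ ob R m) :
    ofLin (skewMap σ (toLin g)) = ∑ j : Fin m, rmul (σ (toLin g (ve R) j)) ≫ mu R m j :=
  hom_ext fun x => by
    rw [toLin_sum]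
    funext k
    rw [Finset.sum_apply]
    have h1 : ∀ y : Fin 1 → R, toLin g y k = y 0 * toLin g (ve R) k := by
      intro y
      rw [eq_smul_ve y, map_smul]; simp
    show σ (toLin g (fun i => σ.symm (x i)) k) = _
    rw [h1]
    simp [Pi.single_apply, Finset.sum_ite_eq, map_mul]

@[simp] lemma skew_apply (σ : R ≃+* R) {n m : ℕ} (f : (Fin n → R) →ₗ[R] (Fin m → R))
    (x : Fin n → R) (k : Fin m) :
    toLin (ofLin (skewMap σ f)) x k = σ (f (fun i => σ.symm (x i)) k) := rfl

lemma mu_skew (σ : R ≃+* R) {n m : ℕ} (j : Fin n) (f : ob R n ⟶ ob R m) :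
    mu R n j ≫ ofLin (skewMap σ (toLin f)) = ofLin (skewMap σ (toLin (mu R n j ≫ f))) :=
  hom_ext fun x => by
    funext k
    simp only [toLin_comp, toLin_mu, skew_apply]
    have harg : (fun i => σ.symm ((Pi.single j (x 0) : Fin n → R) i)) = (Pi.single j (σ.symm (x 0)) : Fin n → R) := by
      funext i
      rcases eq_or_ne i j with h | h
      · subst h; simp
      · simp [Pi.single_eq_of_ne h]
    rw [harg]

end MuPr
section Phase1

variable {R : Type} [Ring R]

lemma nontrivialR (hIBN : ∀ n m : ℕ, Nonempty ((Fin n → R) ≃ₗ[R] (Fin m → R)) → n = m) :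
    Nontrivial R := by
  by_contra h
  have hs : Subsingleton R := not_nontrivial_iff_subsingleton.mp h
  have : (0 : ℕ) = 1 := by
    refine hIBN 0 1 ⟨LinearEquiv.ofLinear 0 0 ?_ ?_⟩
    · apply LinearMap.ext; intro x; exact Subsingleton.elim _ _
    · apply LinearMap.ext; intro x; funext i; exact i.elim0
  simp at this

lemma iso_eq (hIBN : ∀ n m : ℕ, Nonempty ((Fin n → R) ≃ₗ[R] (Fin m → R)) → n = m)
    {n m : SR R} (e : n ≅ m) : n = m :=
  hIBN n m ⟨LinearEquiv.ofLinear (toLin e.hom) (toLin e.inv) e.inv_hom_id e.hom_inv_id⟩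

variable (F G : SR R ⥤ SR R)

lemma Ffaith (h1 : F ⋙ G = 𝟭 (SR R)) {n m : SR R} {f f' : n ⟶ m}
    (h : F.map f = F.map f') : f = f' := by
  have e1 := Functor.congr_hom h1 f
  have e2 := Functor.congr_hom h1 f'
  simp only [Functor.comp_map, Functor.id_map] at e1 e2
  have : G.map (F.map f) = G.map (F.map f') := by rw [h]
  rw [e1, e2, ← Category.assoc, ← Category.assoc] at this
  exact (cancel_epi _).mp ((cancel_mono _).mp this)

lemma Ffull (h1 : F ⋙ G = 𝟭 (SR R)) (h2 : G ⋙ F = 𝟭 (SR R)) {n m : SR R}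
    (g : F.obj n ⟶ F.obj m) : ∃ f : n ⟶ m, F.map f = g := by
  refine ⟨eqToHom (Functor.congr_obj h1 n).symm ≫ G.map g ≫ eqToHom (Functor.congr_obj h1 m), ?_⟩
  have e2 := Functor.congr_hom h2 g
  simp only [Functor.comp_map, Functor.id_map] at e2
  simp [eqToHom_map, e2, eqToHom_trans]

lemma comp_through_zero {n m p : SR R} (hp : p = ob R 0) (q : n ⟶ p) (r : p ⟶ m) :
    q ≫ r = 0 := by
  subst hp
  apply hom_ext
  intro x
  have hz : toLin q x = 0 := by funext i; exact i.elim0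
  show toLin r (toLin q x) = 0
  rw [hz, map_zero]

lemma hF0 (hnt : Nontrivial R)
    (h1 : F ⋙ G = 𝟭 (SR R)) (h2 : G ⋙ F = 𝟭 (SR R)) :
    F.obj (ob R 0) = ob R 0 := by
  have hsub : ∀ a b : ob R 1 ⟶ F.obj (ob R 0), a = b := by
    intro a b
    have hs : F.obj (G.obj (ob R 1)) = ob R 1 := Functor.congr_obj h2 _
    obtain ⟨c, hc⟩ := Ffull F G h1 h2 (n := G.obj (ob R 1)) (m := ob R 0) (eqToHom hs ≫ a)
    obtain ⟨d, hd⟩ := Ffull F G h1 h2 (n := G.obj (ob R 1)) (m := ob R 0) (eqToHom hs ≫ b)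
    have hcd : c = d := by
      apply hom_ext; intro x; funext i; exact i.elim0
    have : eqToHom hs ≫ a = eqToHom hs ≫ b := by rw [← hc, ← hd, hcd]
    exact (cancel_epi (eqToHom hs)).mp this
  rcases Nat.eq_zero_or_pos (F.obj (ob R 0) : ℕ) with h | h
  · exact h
  · exfalso
    have := hsub (mu R (F.obj (ob R 0)) ⟨0, h⟩) 0
    have h2' := congrFun (congrArg (fun f => toLin f (ve R)) this) ⟨0, h⟩
    change (Pi.single (⟨0, h⟩ : Fin (natOf (F.obj (ob R 0)))) (1 : R) : Fin _ → R) ⟨0, h⟩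
      = (0 : Fin (natOf (F.obj (ob R 0))) → R) ⟨0, h⟩ at h2'
    simp at h2'

lemma Fzero (hz : F.obj (ob R 0) = ob R 0) {n m : ℕ} :
    F.map (0 : ob R n ⟶ ob R m) = 0 := by
  have hfact : (0 : ob R n ⟶ ob R m) = (0 : ob R n ⟶ ob R 0) ≫ (0 : ob R 0 ⟶ ob R m) :=
    (comp_through_zero rfl _ _).symm
  rw [hfact, F.map_comp]
  exact comp_through_zero hz _ _

lemma jointF (h1 : F ⋙ G = 𝟭 (SR R)) (h2 : G ⋙ F = 𝟭 (SR R)) {n m : ℕ} {Y : SR R}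
    (a b : F.obj (ob R (n + m)) ⟶ Y)
    (ea : F.map (binl R n m) ≫ a = F.map (binl R n m) ≫ b)
    (eb : F.map (binr R n m) ≫ a = F.map (binr R n m) ≫ b) : a = b := by
  have hy : F.obj (G.obj Y) = Y := Functor.congr_obj h2 _
  obtain ⟨a', ha⟩ := Ffull F G h1 h2 (n := ob R (n + m)) (m := G.obj Y) (a ≫ eqToHom hy.symm)
  obtain ⟨b', hb⟩ := Ffull F G h1 h2 (n := ob R (n + m)) (m := G.obj Y) (b ≫ eqToHom hy.symm)
  have ha' : a = F.map a' ≫ eqToHom hy := by rw [ha]; simp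
  have hb' : b = F.map b' ≫ eqToHom hy := by rw [hb]; simp
  rw [ha', hb'] at ea eb
  rw [← Category.assoc, ← Category.assoc] at ea eb
  have ea := (cancel_mono (eqToHom hy)).mp ea
  have eb := (cancel_mono (eqToHom hy)).mp eb
  rw [← F.map_comp, ← F.map_comp] at ea eb
  have ea' := Ffaith F G h1 ea
  have eb' := Ffaith F G h1 eb
  have : a' = b' := by
    have htot := btotal (R := R) n m
    calc a' = 𝟙 _ ≫ a' := (Category.id_comp a').symm
    _ = (bfst R n m ≫ binl R n m + bsnd R n m ≫ binr R n m) ≫ a' := by rw [htot]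
    _ = bfst R n m ≫ (binl R n m ≫ a') + bsnd R n m ≫ (binr R n m ≫ a') := by
        rw [add_comp', Category.assoc, Category.assoc]
    _ = bfst R n m ≫ (binl R n m ≫ b') + bsnd R n m ≫ (binr R n m ≫ b') := by
        rw [ea', eb']
    _ = (bfst R n m ≫ binl R n m + bsnd R n m ≫ binr R n m) ≫ b' := by
        rw [add_comp', Category.assoc, Category.assoc]
    _ = b' := by rw [htot, Category.id_comp]
  rw [ha', hb', this]

end Phase1
section Phase1b

variable {R : Type} [Ring R]

lemma comp_pair_id {a b : SR R} (u : a ⟶ b) (v : b ⟶ a) (huv : u ≫ v = 𝟙 a)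
    {Y : SR R} (h : a ⟶ Y) : u ≫ v ≫ h = h := by
  rw [← Category.assoc, huv, Category.id_comp]

lemma comp_pair_zero {a b c : SR R} (u : a ⟶ b) (v : b ⟶ c) (huv : u ≫ v = 0)
    {Y : SR R} (h : c ⟶ Y) : u ≫ v ≫ h = 0 := by
  rw [← Category.assoc, huv, zero_comp']

lemma binl_fst_assoc {n m : ℕ} {Y : SR R} (h : ob R n ⟶ Y) :
    binl R n m ≫ bfst R n m ≫ h = h := comp_pair_id _ _ (binl_fst n m) h

lemma binr_snd_assoc {n m : ℕ} {Y : SR R} (h : ob R m ⟶ Y) :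
    binr R n m ≫ bsnd R n m ≫ h = h := comp_pair_id _ _ (binr_snd n m) h

lemma binl_snd_assoc {n m : ℕ} {Y : SR R} (h : ob R m ⟶ Y) :
    binl R n m ≫ bsnd R n m ≫ h = 0 := comp_pair_zero _ _ (binl_snd n m) h

lemma binr_fst_assoc {n m : ℕ} {Y : SR R} (h : ob R n ⟶ Y) :
    binr R n m ≫ bfst R n m ≫ h = 0 := comp_pair_zero _ _ (binr_fst n m) h

variable (F G : SR R ⥤ SR R)

lemma Fadd (h1 : F ⋙ G = 𝟭 (SR R)) (h2 : G ⋙ F = 𝟭 (SR R))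
    (hz0 : F.obj (ob R 0) = ob R 0) {n m : ℕ} (f g : ob R n ⟶ ob R m) :
    F.map (f + g) = F.map f + F.map g := by
  have hz : ∀ {p q : ℕ}, F.map (0 : ob R p ⟶ ob R q) = 0 := fun {p q} => Fzero F hz0
  set H : ob R (n + n) ⟶ ob R (m + m) :=
    bfst R n n ≫ f ≫ binl R m m + bsnd R n n ≫ g ≫ binr R m m with hH
  have hstep1 : f + g
      = (binl R n n + binr R n n) ≫ H ≫ (bfst R m m + bsnd R m m) := by
    rw [hH]
    simp only [comp_add', add_comp', Category.assoc, binl_fst_assoc, binr_snd_assoc,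
      binl_snd_assoc, binr_fst_assoc, binl_fst, binr_snd, binl_snd, binr_fst,
      comp_zero', zero_comp', add_zero, zero_add, Category.comp_id]
  -- F-image pair lemmas
  have A1 : ∀ {Y : SR R} (h : F.obj (ob R n) ⟶ Y),
      F.map (binl R n n) ≫ F.map (bfst R n n) ≫ h = h := fun h =>
    comp_pair_id _ _ (by rw [← F.map_comp, binl_fst, F.map_id]) h
  have A2 : ∀ {Y : SR R} (h : F.obj (ob R n) ⟶ Y),
      F.map (binr R n n) ≫ F.map (bsnd R n n) ≫ h = h := fun h =>
    comp_pair_id _ _ (by rw [← F.map_comp, binr_snd, F.map_id]) h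
  have AZ1 : ∀ {Y : SR R} (h : F.obj (ob R n) ⟶ Y),
      F.map (binl R n n) ≫ F.map (bsnd R n n) ≫ h = 0 := fun h =>
    comp_pair_zero _ _ (by rw [← F.map_comp, binl_snd, hz]) h
  have AZ2 : ∀ {Y : SR R} (h : F.obj (ob R n) ⟶ Y),
      F.map (binr R n n) ≫ F.map (bfst R n n) ≫ h = 0 := fun h =>
    comp_pair_zero _ _ (by rw [← F.map_comp, binr_fst, hz]) h
  have key : F.map H
      = F.map (bfst R n n) ≫ F.map f ≫ F.map (binl R m m)
        + F.map (bsnd R n n) ≫ F.map g ≫ F.map (binr R m m) := by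
    apply jointF F G h1 h2
    · have hl : binl R n n ≫ H = f ≫ binl R m m := by
        rw [hH]
        simp only [comp_add', binl_fst_assoc, binl_snd_assoc, comp_zero', add_zero]
      rw [← F.map_comp, hl, F.map_comp]
      simp only [comp_add', A1, AZ1, add_zero]
    · have hr : binr R n n ≫ H = g ≫ binr R m m := by
        rw [hH]
        simp only [comp_add', binr_fst_assoc, binr_snd_assoc, zero_comp', zero_add]
      rw [← F.map_comp, hr, F.map_comp]
      simp only [comp_add', A2, AZ2, zero_add]
  have D1 : ∀ {Y : SR R} (h : F.obj (ob R n) ⟶ Y),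
      F.map (binl R n n + binr R n n) ≫ F.map (bfst R n n) ≫ h = h := fun h =>
    comp_pair_id _ _ (by
      rw [← F.map_comp, add_comp', binl_fst, binr_fst, add_zero, F.map_id]) h
  have D2 : ∀ {Y : SR R} (h : F.obj (ob R n) ⟶ Y),
      F.map (binl R n n + binr R n n) ≫ F.map (bsnd R n n) ≫ h = h := fun h =>
    comp_pair_id _ _ (by
      rw [← F.map_comp, add_comp', binl_snd, binr_snd, zero_add, F.map_id]) h
  have E1 : F.map (binl R m m) ≫ F.map (bfst R m m + bsnd R m m) = 𝟙 _ := by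
    rw [← F.map_comp, comp_add', binl_fst, binl_snd, add_zero, F.map_id]
  have E2 : F.map (binr R m m) ≫ F.map (bfst R m m + bsnd R m m) = 𝟙 _ := by
    rw [← F.map_comp, comp_add', binr_fst, binr_snd, zero_add, F.map_id]
  rw [hstep1, F.map_comp, F.map_comp, key]
  simp only [comp_add', add_comp', Category.assoc, E1, E2, Category.comp_id, D1, D2]

end Phase1b
section Phase1c

variable {R : Type} [Ring R]

variable (F G : SR R ⥤ SR R)

lemma habs (hIBN : ∀ n m : ℕ, Nonempty ((Fin n → R) ≃ₗ[R] (Fin m → R)) → n = m)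
    (h1 : F ⋙ G = 𝟭 (SR R)) (h2 : G ⋙ F = 𝟭 (SR R))
    (hz0 : F.obj (ob R 0) = ob R 0) (n m : ℕ) :
    natOf (F.obj (ob R (n + m))) = natOf (F.obj (ob R n)) + natOf (F.obj (ob R m)) := by
  have hz : ∀ {p q : ℕ}, F.map (0 : ob R p ⟶ ob R q) = 0 := fun {p q} => Fzero F hz0
  set a : ℕ := natOf (F.obj (ob R n)) with ha
  set b : ℕ := natOf (F.obj (ob R m)) with hb
  apply iso_eq hIBN (n := F.obj (ob R (n + m))) (m := ob R (a + b))
  refine ⟨F.map (bfst R n m) ≫ binl R a b + F.map (bsnd R n m) ≫ binr R a b,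
    bfst R a b ≫ F.map (binl R n m) + bsnd R a b ≫ F.map (binr R n m), ?_, ?_⟩
  · -- hom ≫ inv = 𝟙 (F.obj (n+m))
    simp only [comp_add', add_comp', Category.assoc,
      binl_fst_assoc, binr_snd_assoc, binl_snd_assoc, binr_fst_assoc,
      comp_zero', zero_comp', add_zero, zero_add]
    rw [← F.map_comp, ← F.map_comp, ← Fadd F G h1 h2 hz0, btotal, F.map_id]
  · -- inv ≫ hom = 𝟙 (a + b)
    simp only [comp_add', add_comp', Category.assoc]
    have k1 : F.map (binl R n m) ≫ F.map (bfst R n m) ≫ binl R a b = binl R a b :=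
      comp_pair_id _ _ (by rw [← F.map_comp, binl_fst, F.map_id]) _
    have k2 : F.map (binr R n m) ≫ F.map (bsnd R n m) ≫ binr R a b = binr R a b :=
      comp_pair_id _ _ (by rw [← F.map_comp, binr_snd, F.map_id]) _
    have k3 : F.map (binl R n m) ≫ F.map (bsnd R n m) ≫ binr R a b = 0 :=
      comp_pair_zero _ _ (by rw [← F.map_comp, binl_snd, hz]) _
    have k4 : F.map (binr R n m) ≫ F.map (bfst R n m) ≫ binl R a b = 0 :=
      comp_pair_zero _ _ (by rw [← F.map_comp, binr_fst, hz]) _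
    rw [k1, k2, k3, k4, comp_zero', comp_zero', add_zero, zero_add, btotal]

lemma hobj (hIBN : ∀ n m : ℕ, Nonempty ((Fin n → R) ≃ₗ[R] (Fin m → R)) → n = m)
    (h1 : F ⋙ G = 𝟭 (SR R)) (h2 : G ⋙ F = 𝟭 (SR R)) :
    ∀ n : ℕ, F.obj (ob R n) = ob R n := by
  have hnt : Nontrivial R := nontrivialR hIBN
  have hz0 : F.obj (ob R 0) = ob R 0 := hF0 F G hnt h1 h2
  have hmul : ∀ n : ℕ, natOf (F.obj (ob R n)) = n * natOf (F.obj (ob R 1)) := by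
    intro n
    induction n with
    | zero => rw [Nat.zero_mul]; exact congrArg natOf hz0
    | succ k ih =>
      have h := habs F G hIBN h1 h2 hz0 k 1
      show natOf (F.obj (ob R (k + 1))) = _
      rw [h, ih]
      ring
  have hsur : natOf (F.obj (ob R (natOf (G.obj (ob R 1))))) = 1 :=
    congrArg natOf (Functor.congr_obj h2 (ob R 1))
  have hone : natOf (F.obj (ob R 1)) = 1 := by
    have e := hmul (natOf (G.obj (ob R 1)))
    rw [hsur] at e
    have hd : natOf (F.obj (ob R 1)) ∣ 1 := by
      refine ⟨natOf (G.obj (ob R 1)), ?_⟩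
      rw [mul_comm]
      exact e
    exact Nat.dvd_one.mp hd
  intro n
  show natOf (F.obj (ob R n)) = natOf (ob R n)
  rw [hmul n, hone, mul_one]

end Phase1c
section Phase2

variable {R : Type} [Ring R]

/-- A "concrete automorphism" of `S_R`: an object-fixing bijective endofunctor datum. -/
structure ConcAuto (R : Type) [Ring R] where
  app : ∀ {n m : ℕ}, (ob R n ⟶ ob R m) → (ob R n ⟶ ob R m)
  app' : ∀ {n m : ℕ}, (ob R n ⟶ ob R m) → (ob R n ⟶ ob R m)
  hid : ∀ n : ℕ, app (𝟙 (ob R n)) = 𝟙 (ob R n)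
  hcomp : ∀ {n m k : ℕ} (f : ob R n ⟶ ob R m) (g : ob R m ⟶ ob R k),
      app (f ≫ g) = app f ≫ app g
  hadd : ∀ {n m : ℕ} (f g : ob R n ⟶ ob R m), app (f + g) = app f + app g
  hleft : ∀ {n m : ℕ} (f : ob R n ⟶ ob R m), app' (app f) = f
  hright : ∀ {n m : ℕ} (f : ob R n ⟶ ob R m), app (app' f) = f

namespace ConcAuto

variable (A : ConcAuto R)

lemma hzero {n m : ℕ} : A.app (0 : ob R n ⟶ ob R m) = 0 := by
  have h := A.hadd (0 : ob R n ⟶ ob R m) 0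
  rw [add_zero] at h
  have h2 : A.app (0 : ob R n ⟶ ob R m) + 0 = A.app 0 + A.app 0 := by rw [add_zero]; exact h
  exact (add_left_cancel h2).symm

lemma hsum {n m : ℕ} {ι : Type} (s : Finset ι) (f : ι → (ob R n ⟶ ob R m)) :
    A.app (∑ i ∈ s, f i) = ∑ i ∈ s, A.app (f i) := by
  classical
  induction s using Finset.induction_on with
  | empty => simpa using A.hzero
  | insert a s h ih => rw [Finset.sum_insert h, Finset.sum_insert h, A.hadd, ih]

/-- the ring automorphism induced on `R = End(R^1)` -/
def sig (r : R) : R := toLin (A.app (rmul r)) (ve R) 0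

def sig' (r : R) : R := toLin (A.app' (rmul r)) (ve R) 0

lemma mu_pr_assoc {n : ℕ} (i j : Fin n) {Y : SR R} (h : ob R 1 ⟶ Y) :
    mu R n i ≫ pr R n j ≫ h = if j = i then h else 0 := by
  rcases eq_or_ne j i with e | e
  · rw [if_pos e]
    exact comp_pair_id _ _ (by rw [mu_pr, if_pos e]) h
  · rw [if_neg e]
    exact comp_pair_zero _ _ (by rw [mu_pr, if_neg e]) h

lemma app_rmul (r : R) : A.app (rmul r) = rmul (A.sig r) := endo_eq_rmul _

lemma app'_rmul (r : R) : A.app' (rmul r) = rmul (A.sig' r) := endo_eq_rmul _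

lemma sig_one : A.sig 1 = 1 := by
  apply rmul_inj
  rw [← app_rmul, rmul_one, A.hid]

lemma sig_mul (a b : R) : A.sig (a * b) = A.sig a * A.sig b := by
  apply rmul_inj
  rw [← app_rmul, ← rmul_comp, A.hcomp, app_rmul, app_rmul, rmul_comp]

lemma sig_add (a b : R) : A.sig (a + b) = A.sig a + A.sig b := by
  apply rmul_inj
  rw [← app_rmul, rmul_add, A.hadd, app_rmul, app_rmul, rmul_add]

lemma sig'_sig (r : R) : A.sig' (A.sig r) = r := by
  apply rmul_inj
  rw [← app'_rmul, ← app_rmul, A.hleft]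

lemma sig_sig' (r : R) : A.sig (A.sig' r) = r := by
  apply rmul_inj
  rw [← app_rmul, ← app'_rmul, A.hright]

/-- the induced ring automorphism of `R` -/
def sigma : R ≃+* R where
  toFun := A.sig
  invFun := A.sig'
  left_inv := A.sig'_sig
  right_inv := A.sig_sig'
  map_mul' := A.sig_mul
  map_add' := A.sig_add

/-- the natural transformation component -/
def nu (n : ℕ) : ob R n ⟶ ob R n := ∑ i : Fin n, A.app (pr R n i) ≫ mu R n i

def nu' (n : ℕ) : ob R n ⟶ ob R n := ∑ i : Fin n, pr R n i ≫ A.app (mu R n i)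

lemma mu_app_nu (n : ℕ) (j : Fin n) : A.app (mu R n j) ≫ A.nu n = mu R n j := by
  rw [nu, comp_sum']
  have h : ∀ i : Fin n, A.app (mu R n j) ≫ A.app (pr R n i) ≫ mu R n i
      = if i = j then mu R n i else 0 := by
    intro i
    rw [← Category.assoc, ← A.hcomp, mu_pr]
    rcases eq_or_ne i j with h | h
    · rw [if_pos h, if_pos h, A.hid, Category.id_comp]
    · rw [if_neg h, if_neg h, A.hzero, zero_comp']
  rw [Finset.sum_congr rfl (fun i _ => h i)]
  simp

lemma app_id_decomp (n : ℕ) :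
    (∑ i : Fin n, A.app (pr R n i) ≫ A.app (mu R n i)) = 𝟙 (ob R n) := by
  have : ∀ i : Fin n, A.app (pr R n i) ≫ A.app (mu R n i) = A.app (pr R n i ≫ mu R n i) :=
    fun i => (A.hcomp _ _).symm
  rw [Finset.sum_congr rfl (fun i _ => this i), ← A.hsum, pr_mu_total, A.hid]

lemma nu_nu' (n : ℕ) : A.nu n ≫ A.nu' n = 𝟙 (ob R n) := by
  rw [nu, sum_comp']
  have h : ∀ i : Fin n, (A.app (pr R n i) ≫ mu R n i) ≫ A.nu' n
      = A.app (pr R n i) ≫ A.app (mu R n i) := by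
    intro i
    rw [Category.assoc, nu', comp_sum', comp_sum']
    have h2 : ∀ j : Fin n, A.app (pr R n i) ≫ mu R n i ≫ pr R n j ≫ A.app (mu R n j)
        = if j = i then A.app (pr R n i) ≫ A.app (mu R n j) else 0 := by
      intro j
      rw [mu_pr_assoc]
      rcases eq_or_ne j i with e | e
      · rw [if_pos e, if_pos e]
      · rw [if_neg e, if_neg e, comp_zero']
    rw [Finset.sum_congr rfl (fun j _ => h2 j)]
    simp
  rw [Finset.sum_congr rfl (fun i _ => h i)]
  exact A.app_id_decomp n

lemma nu'_nu (n : ℕ) : A.nu' n ≫ A.nu n = 𝟙 (ob R n) := by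
  rw [nu', sum_comp']
  have h : ∀ i : Fin n, (pr R n i ≫ A.app (mu R n i)) ≫ A.nu n = pr R n i ≫ mu R n i := by
    intro i
    rw [Category.assoc, A.mu_app_nu]
  rw [Finset.sum_congr rfl (fun i _ => h i), pr_mu_total]

@[simp] lemma sigma_apply (r : R) : A.sigma r = A.sig r := rfl

lemma nat_one {m : ℕ} (g : ob R 1 ⟶ ob R m) :
    A.app g ≫ A.nu m = ofLin (skewMap A.sigma (toLin g)) := by
  conv_lhs => rw [hom_one_decomp g]
  rw [A.hsum, sum_comp']
  have h : ∀ j : Fin m, A.app (rmul (toLin g (ve R) j) ≫ mu R m j) ≫ A.nu m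
      = rmul (A.sigma (toLin g (ve R) j)) ≫ mu R m j := by
    intro j
    rw [A.hcomp, Category.assoc, A.mu_app_nu, app_rmul, sigma_apply]
  rw [Finset.sum_congr rfl (fun j _ => h j), ← skew_decomp]

lemma joint_epi {n : ℕ} {Y : SR R} (x y : ob R n ⟶ Y)
    (h : ∀ j : Fin n, A.app (mu R n j) ≫ x = A.app (mu R n j) ≫ y) : x = y := by
  have hx : ∀ z : ob R n ⟶ Y,
      z = ∑ i : Fin n, A.app (pr R n i) ≫ (A.app (mu R n i) ≫ z) := by
    intro z
    conv_lhs => rw [← Category.id_comp z, ← A.app_id_decomp n]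
    rw [sum_comp']
    exact Finset.sum_congr rfl fun i _ => Category.assoc _ _ _
  rw [hx x, hx y]
  exact Finset.sum_congr rfl fun i _ => by rw [h i]

lemma naturality {n m : ℕ} (f : ob R n ⟶ ob R m) :
    A.app f ≫ A.nu m = A.nu n ≫ ofLin (skewMap A.sigma (toLin f)) := by
  apply A.joint_epi
  intro j
  rw [← Category.assoc, ← A.hcomp, A.nat_one, ← Category.assoc, A.mu_app_nu,
    mu_skew]

end ConcAuto

end Phase2
/-- if `R` is a ring with invariant basis number, then every automorphism
`φ` of the category `S_R` is naturally isomorphic to the skew-inner automorphism `φ^σ`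
for some ring automorphism `σ` of `R`. -/
theorem stmt4 (R : Type) [Ring R]
    (hIBN : ∀ n m : ℕ, Nonempty ((Fin n → R) ≃ₗ[R] (Fin m → R)) → n = m)
    (φ : Aut (Cat.of (SR R))) :
    ∃ σ : R ≃+* R, Nonempty ((φ.hom.toFunctor : SR R ⥤ SR R) ≅ skewFunctor σ) := by
  let FF : SR R ⥤ SR R := φ.hom.toFunctor
  let GG : SR R ⥤ SR R := φ.inv.toFunctor
  have h1 : FF ⋙ GG = 𝟭 (SR R) := congrArg Cat.Hom.toFunctor φ.hom_inv_id
  have h2 : GG ⋙ FF = 𝟭 (SR R) := congrArg Cat.Hom.toFunctor φ.inv_hom_id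
  have hob : ∀ n : ℕ, FF.obj (ob R n) = ob R n := hobj FF GG hIBN h1 h2
  have hobG : ∀ n : ℕ, GG.obj (ob R n) = ob R n := by
    intro n
    have h := Functor.congr_obj h1 (ob R n)
    rw [Functor.comp_obj, Functor.id_obj, hob n] at h
    exact h
  -- build the concrete automorphism
  let A : ConcAuto R :=
  { app := fun {n m} f => eqToHom (hob n).symm ≫ FF.map f ≫ eqToHom (hob m)
    app' := fun {n m} f => eqToHom (hobG n).symm ≫ GG.map f ≫ eqToHom (hobG m)
    hid := fun n => by simp
    hcomp := fun {n m k} f g => by simp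
    hadd := fun {n m} f g => by
      rw [Fadd FF GG h1 h2 (hob 0), add_comp', comp_add']
    hleft := fun {n m} f => by
      have hc := Functor.congr_hom h1 f
      rw [Functor.comp_map, Functor.id_map] at hc
      simp [eqToHom_map, hc]
    hright := fun {n m} f => by
      have hc := Functor.congr_hom h2 f
      rw [Functor.comp_map, Functor.id_map] at hc
      simp [eqToHom_map, hc] }
  have happ : ∀ {n m : ℕ} (f : ob R n ⟶ ob R m),
      A.app f = eqToHom (hob n).symm ≫ FF.map f ≫ eqToHom (hob m) := fun f => rfl
  refine ⟨A.sigma, ⟨(NatIso.ofComponents (C := SR R) (D := SR R) (F := FF) (G := skewFunctor A.sigma) (fun (k : ℕ) => ?_) (fun {X Y} f => ?_) : FF ≅ skewFunctor A.sigma)⟩⟩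
  · exact
    { hom := eqToHom (hob k) ≫ A.nu k
      inv := A.nu' k ≫ eqToHom (hob k).symm
      hom_inv_id := by
        show (eqToHom (hob k) ≫ A.nu k) ≫ A.nu' k ≫ eqToHom (hob k).symm = 𝟙 (FF.obj (ob R k))
        rw [Category.assoc, ← Category.assoc (A.nu k), A.nu_nu', Category.id_comp,
          eqToHom_trans, eqToHom_refl]
      inv_hom_id := by
        show (A.nu' k ≫ eqToHom (hob k).symm) ≫ eqToHom (hob k) ≫ A.nu k = 𝟙 (ob R k)
        rw [Category.assoc, ← Category.assoc (eqToHom (hob k).symm), eqToHom_trans,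
          eqToHom_refl, Category.id_comp, A.nu'_nu] }
  · -- naturality
    show FF.map f ≫ eqToHom (hob Y) ≫ A.nu Y = (eqToHom (hob X) ≫ A.nu X) ≫ (skewFunctor A.sigma).map f
    have hmap : (skewFunctor A.sigma).map f = ofLin (skewMap A.sigma (toLin f)) := rfl
    have hstep : FF.map f ≫ eqToHom (hob Y) = eqToHom (hob X) ≫ A.app f := by
      rw [happ (n := X) (m := Y), ← Category.assoc, eqToHom_trans, eqToHom_refl, Category.id_comp]
    rw [← Category.assoc, hstep, hmap, Category.assoc, A.naturality (n := X) (m := Y), ← Category.assoc]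
    rfl
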